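/- Let (z,w) be coordinates on ℂ² and ω = (1/(w−z))·(dz/z − dw/w). Then ω is a logarithmic 1-form on ℂ² with poles along D = {z=0} ∪ {w=0} ∪ {z=w}, and its residues are Res_{z=0}(ω) = 1/w, Res_{w=0}(ω) = 1/z, Res_{z=w}(ω) = −1/z; in particular each residue has a simple pole at the origin and does not extend holomorphically across Sing(D). -/

import Mathlib

open ContinuousLinearMap

lemma no_entire_ext (c : ℂ) (hc : c ≠ 0) :
    ¬ ∃ F : ℂ → ℂ, AnalyticOnNhd ℂ F Set.univ ∧ ∀ w : ℂ, w ≠ 0 → F w = c * w⁻¹ := by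
  rintro ⟨F, hF, hFeq⟩
  have hcont : ContinuousAt F 0 := (hF 0 (Set.mem_univ 0)).continuousAt
  have h1 : Filter.Tendsto (fun w : ℂ => w * F w) (nhdsWithin 0 {0}ᶜ) (nhds 0) := by
    have : ContinuousAt (fun w : ℂ => w * F w) 0 := (continuous_id.continuousAt.mul hcont)
    simpa using this.tendsto.mono_left nhdsWithin_le_nhds
  have h2 : Filter.Tendsto (fun w : ℂ => w * F w) (nhdsWithin 0 {0}ᶜ) (nhds c) := by
    have : ∀ w ∈ ({0}ᶜ : Set ℂ), w * F w = c := by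
      intro w hw
      have hw' : w ≠ 0 := hw
      rw [hFeq w hw']
      field_simp
    refine Filter.Tendsto.congr' ?_ tendsto_const_nhds
    filter_upwards [self_mem_nhdsWithin] with w hw using (this w hw).symm
  exact hc ((tendsto_nhds_unique h1 h2).symm)

/-- **Saito's example of a logarithmic 1-form with non-holomorphic residues.**
The form `ω = (1/(w-z))·(dz/z - dw/w)` on `ℂ²` is a logarithmic `1`-form with poles along
`D = {z=0} ∪ {w=0} ∪ {z=w}`, with residues `Res_{z=0}(ω) = 1/w`, `Res_{w=0}(ω) = 1/z`,
`Res_{z=w}(ω) = -1/z`; each residue has a simple pole at the origin and does not extend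
holomorphically across `Sing(D) = {0}`. -/
theorem saito_example :
    let dz : ℂ × ℂ →L[ℂ] ℂ := ContinuousLinearMap.fst ℂ ℂ ℂ
    let dw : ℂ × ℂ →L[ℂ] ℂ := ContinuousLinearMap.snd ℂ ℂ ℂ
    let ω : ℂ × ℂ → (ℂ × ℂ →L[ℂ] ℂ) := fun p =>
      ((p.2 - p.1)⁻¹ * (p.1)⁻¹) • dz - ((p.2 - p.1)⁻¹ * (p.2)⁻¹) • dw
    -- ω is holomorphic off D
    (AnalyticOnNhd ℂ ω {p : ℂ × ℂ | p.1 ≠ 0 ∧ p.2 ≠ 0 ∧ p.1 ≠ p.2})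
    -- logarithmic along {z = 0} with residue 1/w
    ∧ (∀ w₀ : ℂ, w₀ ≠ 0 →
      ∃ (U : Set (ℂ × ℂ)) (a : ℂ × ℂ → ℂ) (η : ℂ × ℂ → (ℂ × ℂ →L[ℂ] ℂ)),
        IsOpen U ∧ ((0 : ℂ), w₀) ∈ U ∧ AnalyticOnNhd ℂ a U ∧ AnalyticOnNhd ℂ η U ∧
        (∀ p ∈ U, p.1 ≠ 0 → ω p = ((a p) / p.1) • dz + η p) ∧
        (∀ p ∈ U, p.1 = 0 → a p = (p.2)⁻¹))
    -- logarithmic along {w = 0} with residue 1/z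
    ∧ (∀ z₀ : ℂ, z₀ ≠ 0 →
      ∃ (U : Set (ℂ × ℂ)) (a : ℂ × ℂ → ℂ) (η : ℂ × ℂ → (ℂ × ℂ →L[ℂ] ℂ)),
        IsOpen U ∧ (z₀, (0 : ℂ)) ∈ U ∧ AnalyticOnNhd ℂ a U ∧ AnalyticOnNhd ℂ η U ∧
        (∀ p ∈ U, p.2 ≠ 0 → ω p = ((a p) / p.2) • dw + η p) ∧
        (∀ p ∈ U, p.2 = 0 → a p = (p.1)⁻¹))
    -- logarithmic along {z = w} with residue -1/z
    ∧ (∀ z₀ : ℂ, z₀ ≠ 0 →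
      ∃ (U : Set (ℂ × ℂ)) (a : ℂ × ℂ → ℂ) (η : ℂ × ℂ → (ℂ × ℂ →L[ℂ] ℂ)),
        IsOpen U ∧ (z₀, z₀) ∈ U ∧ AnalyticOnNhd ℂ a U ∧ AnalyticOnNhd ℂ η U ∧
        (∀ p ∈ U, p.2 - p.1 ≠ 0 → ω p = ((a p) / (p.2 - p.1)) • (dw - dz) + η p) ∧
        (∀ p ∈ U, p.2 - p.1 = 0 → a p = -(p.1)⁻¹))
    -- the residues do not extend holomorphically across the origin
    ∧ (¬ ∃ F : ℂ → ℂ, AnalyticOnNhd ℂ F Set.univ ∧ ∀ w : ℂ, w ≠ 0 → F w = w⁻¹)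
    ∧ (¬ ∃ F : ℂ → ℂ, AnalyticOnNhd ℂ F Set.univ ∧ ∀ z : ℂ, z ≠ 0 → F z = -z⁻¹) := by
  intro dz dw ω
  have hOz : IsOpen {p : ℂ × ℂ | p.1 ≠ 0} := isOpen_ne_fun continuous_fst continuous_const
  have hOw : IsOpen {p : ℂ × ℂ | p.2 ≠ 0} := isOpen_ne_fun continuous_snd continuous_const
  have hOd : IsOpen {p : ℂ × ℂ | p.2 - p.1 ≠ 0} :=
    isOpen_ne_fun (continuous_snd.sub continuous_fst) continuous_const
  refine ⟨?_, ?_, ?_, ?_, ?_, ?_⟩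
  · -- analyticity off D
    intro p hp
    obtain ⟨h1, h2, h3⟩ := hp
    have hd : p.2 - p.1 ≠ 0 := sub_ne_zero.mpr (Ne.symm h3)
    exact ((((analyticAt_snd.sub analyticAt_fst).inv hd).mul
      (analyticAt_fst.inv h1)).smul analyticAt_const).sub
      ((((analyticAt_snd.sub analyticAt_fst).inv hd).mul
      (analyticAt_snd.inv h2)).smul analyticAt_const)
  · -- along z = 0
    intro w₀ hw₀
    refine ⟨{p : ℂ × ℂ | p.2 ≠ 0} ∩ {p : ℂ × ℂ | p.2 - p.1 ≠ 0},
      fun p => (p.2 - p.1)⁻¹, fun p => -(((p.2 - p.1)⁻¹ * (p.2)⁻¹) • dw),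
      hOw.inter hOd, ⟨hw₀, by simpa using hw₀⟩, ?_, ?_, ?_, ?_⟩
    · intro p hp
      exact (analyticAt_snd.sub analyticAt_fst).inv hp.2
    · intro p hp
      exact ((((analyticAt_snd.sub analyticAt_fst).inv hp.2).mul
        (analyticAt_snd.inv hp.1)).smul analyticAt_const).neg
    · intro p hp h1
      simp only [ω, div_eq_mul_inv, sub_eq_add_neg]
    · intro p hp h0
      show (p.2 - p.1)⁻¹ = p.2⁻¹
      rw [h0, sub_zero]
  · -- along w = 0
    intro z₀ hz₀
    refine ⟨{p : ℂ × ℂ | p.1 ≠ 0} ∩ {p : ℂ × ℂ | p.2 - p.1 ≠ 0},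
      fun p => -(p.2 - p.1)⁻¹, fun p => ((p.2 - p.1)⁻¹ * (p.1)⁻¹) • dz,
      hOz.inter hOd, ⟨hz₀, by simpa [sub_eq_zero] using hz₀.symm⟩, ?_, ?_, ?_, ?_⟩
    · intro p hp
      exact ((analyticAt_snd.sub analyticAt_fst).inv hp.2).neg
    · intro p hp
      exact (((analyticAt_snd.sub analyticAt_fst).inv hp.2).mul
        (analyticAt_fst.inv hp.1)).smul analyticAt_const
    · intro p hp h2
      simp only [ω, div_eq_mul_inv, neg_mul]
      module
    · intro p hp h0
      show -(p.2 - p.1)⁻¹ = p.1⁻¹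
      rw [h0, zero_sub, inv_neg, neg_neg]
  · -- along z = w
    intro z₀ hz₀
    refine ⟨{p : ℂ × ℂ | p.1 ≠ 0} ∩ {p : ℂ × ℂ | p.2 ≠ 0},
      fun p => -(p.1)⁻¹, fun p => ((p.1 * p.2)⁻¹) • dw,
      hOz.inter hOw, ⟨hz₀, hz₀⟩, ?_, ?_, ?_, ?_⟩
    · intro p hp
      exact (analyticAt_fst.inv hp.1).neg
    · intro p hp
      exact ((analyticAt_fst.mul analyticAt_snd).inv (mul_ne_zero hp.1 hp.2)).smul
        analyticAt_const
    · intro p ⟨h1, h2⟩ hd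
      have hz : p.1 ≠ 0 := h1
      have hw : p.2 ≠ 0 := h2
      ext
      all_goals
        simp only [ω, dz, dw, ContinuousLinearMap.add_apply, ContinuousLinearMap.sub_apply,
          ContinuousLinearMap.smul_apply, ContinuousLinearMap.comp_apply,
          ContinuousLinearMap.inl_apply, ContinuousLinearMap.inr_apply,
          ContinuousLinearMap.coe_fst', ContinuousLinearMap.coe_snd', smul_eq_mul]
        field_simp [hz, hw, hd]
        ring
    · intro p hp h0
      rfl
  · -- 1/w has no entire extension
    have := no_entire_ext 1 one_ne_zero
    intro ⟨F, hF, hFeq⟩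
    exact this ⟨F, hF, fun w hw => by rw [hFeq w hw, one_mul]⟩
  · -- -1/z has no entire extension
    have := no_entire_ext (-1) (by norm_num)
    intro ⟨F, hF, hFeq⟩
    exact this ⟨F, hF, fun w hw => by rw [hFeq w hw]; ring⟩
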